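/- In a finite-dimensional semi-FTvN system arising from a complete hyperbolic polynomial, with λ: V → ℝⁿ the eigenvalue map satisfying the Lidskii majorization λ(a) − λ(b) ≺ λ(a−b): elements a and b strongly commute (‖λ(a) − λ(b)‖ = ‖a − b‖) if and only if (λ(a) − λ(b))^↓ = λ(a − b), where v^↓ denotes the decreasing rearrangement of v ∈ ℝⁿ. -/

import Mathlib

open scoped RealInnerProductSpace Matrix

/-- The decreasing rearrangement of a vector in ℝⁿ. -/
noncomputable def decSort {n : ℕ} (v : Fin n → ℝ) : Fin n → ℝ :=
  fun i => - (((fun j => - v j) ∘ Tuple.sort (fun j => - v j)) i)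

/-- The Euclidean norm is invariant under permutation of coordinates. -/
lemma norm_comp_perm_aux {n : ℕ} (v x : EuclideanSpace ℝ (Fin n)) (σ : Equiv.Perm (Fin n))
    (hx : ∀ i, x i = v (σ i)) : ‖x‖ = ‖v‖ := by
  rw [EuclideanSpace.norm_eq, EuclideanSpace.norm_eq]
  congr 1
  calc ∑ i, ‖x i‖ ^ 2 = ∑ i, ‖v (σ i)‖ ^ 2 := by simp [hx]
    _ = ∑ i, ‖v i‖ ^ 2 := Equiv.sum_comp σ (fun i => ‖v i‖ ^ 2)

theorem stmt18 {V : Type*} [NormedAddCommGroup V] [InnerProductSpace ℝ V]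
    [FiniteDimensional ℝ V] {n : ℕ} (lam : V → EuclideanSpace ℝ (Fin n))
    (h1 : ∀ x : V, ‖lam x‖ = ‖x‖)
    (h2 : ∀ x y : V, ⟪x, y⟫ ≤ ⟪lam x, lam y⟫)
    (hdec : ∀ x : V, ∀ i j : Fin n, i ≤ j → lam x j ≤ lam x i)
    (hlid : ∀ a b : V, ∃ A ∈ doublyStochastic ℝ (Fin n),
      (fun i => lam a i - lam b i) = A.mulVec (fun i => lam (a - b) i))
    (a b : V) :
    ‖lam a - lam b‖ = ‖a - b‖ ↔
      decSort (fun i => lam a i - lam b i) = (fun i => lam (a - b) i) := by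
  classical
  set u : EuclideanSpace ℝ (Fin n) := lam a - lam b with hu
  set v : EuclideanSpace ℝ (Fin n) := lam (a - b) with hv
  have huv : (fun i => lam a i - lam b i) = (u : Fin n → ℝ) := rfl
  have hnv : ‖v‖ = ‖a - b‖ := h1 _
  have hmono : Monotone (fun j => - v j) := by
    intro i j hij
    simp only [neg_le_neg_iff]
    exact hdec (a - b) i j hij
  have hsortv : Tuple.sort (fun j => - v j) = Equiv.refl _ :=
    Tuple.sort_eq_refl_iff_monotone.mpr hmono
  constructor
  · intro h
    have hnu : ‖u‖ = ‖v‖ := by rw [hnv]; exact h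
    obtain ⟨A, hA, hAv⟩ := hlid a b
    obtain ⟨w, hw0, hw1, hwA⟩ := exists_eq_sum_perm_of_mem_doublyStochastic hA
    -- u = ∑ σ, w σ • (v ∘ σ)
    set x : Equiv.Perm (Fin n) → EuclideanSpace ℝ (Fin n) :=
      fun σ => WithLp.toLp 2 (fun i => v (σ i)) with hx
    have hukey : u = ∑ σ : Equiv.Perm (Fin n), w σ • x σ := by
      ext i
      have hAvi : u i = ∑ j, A i j * v j := by
        have := congrFun hAv i
        simpa [Matrix.mulVec, dotProduct, hu, hv] using this
      have hAij : ∀ j, A i j = ∑ σ : Equiv.Perm (Fin n), w σ * (σ.permMatrix ℝ) i j := by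
        intro j
        rw [← hwA]
        simp [Matrix.sum_apply, Matrix.smul_apply, smul_eq_mul]
      have hsum : (∑ σ : Equiv.Perm (Fin n), w σ • x σ) i
          = ∑ σ : Equiv.Perm (Fin n), w σ * v (σ i) := by
        rw [WithLp.ofLp_sum, Finset.sum_apply]
        rfl
      rw [hAvi, hsum]
      calc ∑ j, A i j * v j
          = ∑ j, ∑ σ : Equiv.Perm (Fin n), w σ * (σ.permMatrix ℝ) i j * v j := by
            refine Finset.sum_congr rfl fun j _ => ?_
            rw [hAij j, Finset.sum_mul]
        _ = ∑ σ : Equiv.Perm (Fin n), ∑ j, w σ * (σ.permMatrix ℝ) i j * v j :=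
            Finset.sum_comm
        _ = ∑ σ : Equiv.Perm (Fin n), w σ * v (σ i) := by
            refine Finset.sum_congr rfl fun σ _ => ?_
            simp [Equiv.Perm.permMatrix, PEquiv.toMatrix_apply,
              Equiv.toPEquiv_apply, mul_ite, ite_mul]
    have hnx : ∀ σ : Equiv.Perm (Fin n), ‖x σ‖ = ‖v‖ :=
      fun σ => norm_comp_perm_aux v (x σ) σ (fun i => rfl)
    have hinner_le : ∀ σ : Equiv.Perm (Fin n), ⟪x σ, u⟫ ≤ ‖u‖ * ‖u‖ := by
      intro σ
      calc ⟪x σ, u⟫ ≤ ‖x σ‖ * ‖u‖ := real_inner_le_norm _ _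
        _ = ‖u‖ * ‖u‖ := by rw [hnx σ, hnu]
    have hiu : ⟪u, u⟫ = ∑ σ : Equiv.Perm (Fin n), w σ * ⟪x σ, u⟫ := by
      nth_rewrite 1 [hukey]
      rw [sum_inner]
      exact Finset.sum_congr rfl fun σ _ => real_inner_smul_left _ _ _
    have hsum_eq : ∑ σ : Equiv.Perm (Fin n), w σ * ⟪x σ, u⟫
        = ∑ σ : Equiv.Perm (Fin n), w σ * (‖u‖ * ‖u‖) := by
      rw [← hiu, ← Finset.sum_mul, hw1, one_mul, real_inner_self_eq_norm_mul_norm]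
    have hterm : ∀ σ ∈ (Finset.univ : Finset (Equiv.Perm (Fin n))),
        w σ * ⟪x σ, u⟫ = w σ * (‖u‖ * ‖u‖) :=
      (Finset.sum_eq_sum_iff_of_le
        (fun σ _ => mul_le_mul_of_nonneg_left (hinner_le σ) (hw0 σ))).mp hsum_eq
    have hex : ∃ σ : Equiv.Perm (Fin n), w σ ≠ 0 := by
      by_contra hc
      push_neg at hc
      simp [hc] at hw1
    obtain ⟨σ0, hσ0⟩ := hex
    have heq : ⟪x σ0, u⟫ = ‖u‖ * ‖u‖ :=
      mul_left_cancel₀ hσ0 (hterm σ0 (Finset.mem_univ _))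
    have hxu : x σ0 = u := by
      rcases eq_or_ne ‖u‖ 0 with h0 | h0
      · have hx0 : ‖x σ0‖ = 0 := by rw [hnx σ0, ← hnu, h0]
        rw [norm_eq_zero] at hx0
        have h0' : u = 0 := norm_eq_zero.mp h0
        rw [hx0, h0']
      · have hcs : ⟪x σ0, u⟫ = ‖x σ0‖ * ‖u‖ := by
          rw [heq, hnx σ0, hnu]
        have h' := inner_eq_norm_mul_iff_real.mp hcs
        rw [hnx σ0, hnu] at h'
        have h0' : ‖v‖ ≠ 0 := hnu ▸ h0
        exact smul_right_injective _ h0' h'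
    -- now decSort u = v
    have hneg : (fun j => - u j) = (fun j => - v j) ∘ σ0 := by
      funext j
      have : u j = v (σ0 j) := by rw [← hxu]
      simp [this, Function.comp]
    rw [huv]
    funext i
    show -(((fun j => - u j) ∘ Tuple.sort (fun j => - u j)) i) = v i
    rw [hneg]
    have := Tuple.comp_perm_comp_sort_eq_comp_sort (σ := σ0) (f := fun j => - v j)
    rw [this, hsortv]
    simp
  · intro h
    rw [huv] at h
    have hperm : ∀ i, decSort (u : Fin n → ℝ) i = u (Tuple.sort (fun j => - u j) i) := by
      intro i
      simp [decSort]
    have hnorm : ‖u‖ = ‖v‖ := by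
      rw [EuclideanSpace.norm_eq, EuclideanSpace.norm_eq]
      congr 1
      have hvi : ∀ i, ‖v i‖ ^ 2 = ‖u (Tuple.sort (fun j => - u j) i)‖ ^ 2 := by
        intro i
        rw [← congrFun h i, hperm i]
      calc ∑ i, ‖u i‖ ^ 2
          = ∑ i, ‖u (Tuple.sort (fun j => - u j) i)‖ ^ 2 :=
            (Equiv.sum_comp (Tuple.sort (fun j => - u j)) (fun i => ‖u i‖ ^ 2)).symm
        _ = ∑ i, ‖v i‖ ^ 2 := Finset.sum_congr rfl fun i _ => (hvi i).symm
    rw [hnorm, hnv]
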